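/- Fix a real l > 0 and an integer n ≥ 1. For every integer a, every subset I ⊆ {−1,1,2,…,n}, and every l-convex n-tuple t, there exist an a-admissible sequence (a_0,…,a_{n+1}) and a rational function f on [0,l] with f(0) = f(l) such that: (1) a·δ_{d_I(t)} = Σ_{j=0}^{n+1} a_j·δ_{r_j(t)} + div(f) as divisors on [0,l]; and (2) for every n-tuple t' that is either the zero tuple or has exactly one entry equal to l and all other entries equal to 0, one has the equality of divisors a·δ_{d_I(t')} = Σ_{j=0}^{n+1} a_j·δ_{r_j(t')}. -/

import Mathlib

open Finset

/-- A rational (continuous piecewise-affine, integer slopes) function on the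
segment `[0,l]`, encoded by its breakpoints and slopes, normalized by value
`0` at `0`. -/
structure PLFun (l : ℝ) where
  m : ℕ
  pts : Fin (m + 1) → ℝ
  slope : Fin m → ℤ
  mono : StrictMono pts
  first : pts 0 = 0
  last : pts (Fin.last m) = l

/-- The value of the rational function at `x` (normalized so that the value
at `0` is `0`). -/
noncomputable def PLFun.eval {l : ℝ} (F : PLFun l) (x : ℝ) : ℝ :=
  ∑ i : Fin F.m, (F.slope i : ℝ) *
    (max (min x (F.pts i.succ)) (F.pts i.castSucc) - F.pts i.castSucc)

/-- The divisor of the rational function: left slope minus right slope at each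
point of `[0,l]` (so `−(right slope)` at `0` and the left slope at `l`). -/
noncomputable def PLFun.div {l : ℝ} (F : PLFun l) (p : ℝ) : ℤ :=
  (∑ i : Fin F.m, if F.pts i.succ = p then F.slope i else 0)
    - ∑ i : Fin F.m, if F.pts i.castSucc = p then F.slope i else 0

/-- An `l`-convex `n`-tuple: nonnegative entries with sum at most `l`. -/
def LConvex (l : ℝ) {n : ℕ} (t : Fin n → ℝ) : Prop :=
  (∀ i, 0 ≤ t i) ∧ (∑ i, t i) ≤ l

/-- The points `r_0(t) = 0`, `r_j(t) = t_1 + ⋯ + t_j` for `1 ≤ j ≤ n`, and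
`r_{n+1}(t) = l`. -/
noncomputable def rpt (l : ℝ) {n : ℕ} (t : Fin n → ℝ) (j : Fin (n + 2)) : ℝ :=
  if (j : ℕ) = n + 1 then l
  else ∑ i ∈ Finset.univ.filter (fun i : Fin n => (i : ℕ) < (j : ℕ)), t i

/-- The point `d_I(t)`: `Σ_{j∈I, j≥1} t_j` if `−1 ∉ I`, and
`l − Σ_{j∈I, j≥1} t_j` if `−1 ∈ I` (here `t_j` is the entry of index `j`,
with `1 ≤ j ≤ n`). -/
noncomputable def dIpt (l : ℝ) {n : ℕ} (t : Fin n → ℝ) (I : Finset ℤ) : ℝ :=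
  if (-1 : ℤ) ∈ I then
    l - ∑ i ∈ Finset.univ.filter (fun i : Fin n => ((i : ℕ) : ℤ) + 1 ∈ I), t i
  else ∑ i ∈ Finset.univ.filter (fun i : Fin n => ((i : ℕ) : ℤ) + 1 ∈ I), t i

/-- An `a`-admissible sequence. -/
def AdmissibleSeq (a : ℤ) {m : ℕ} (f : Fin m → ℤ) : Prop :=
  (∀ j, f j = 0 ∨ f j = a ∨ f j = -a) ∧ (∑ j, f j = a) ∧
  ∀ s u : Fin m, s ≤ u → |∑ j ∈ Finset.Icc s u, f j| ≤ |a|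

lemma realize (l : ℝ) (hl : 0 < l) (S : Finset ℝ)
    (hS : ∀ p ∈ S, p ∈ Set.Icc (0:ℝ) l) (h0 : (0:ℝ) ∈ S) (hlS : l ∈ S)
    (D : ℝ → ℤ) (hD0 : ∀ p ∈ Set.Icc (0:ℝ) l, p ∉ S → D p = 0)
    (hsum : ∑ p ∈ S, D p = 0) (hmom : ∑ p ∈ S, p * (D p : ℝ) = 0) :
    ∃ F : PLFun l, F.eval 0 = F.eval l ∧ ∀ p ∈ Set.Icc (0:ℝ) l, F.div p = D p := by
  obtain ⟨m, hm⟩ : ∃ m, S.card = m + 1 := by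
    have := Finset.card_pos.mpr ⟨(0:ℝ), h0⟩
    exact ⟨S.card - 1, by omega⟩
  set pts : Fin (m+1) → ℝ := fun k => S.orderEmbOfFin hm k with hpts
  have hmono : StrictMono pts := (S.orderEmbOfFin hm).strictMono
  have hmem : ∀ k : Fin (m+1), pts k ∈ S := fun k => S.orderEmbOfFin_mem hm k
  have hsurj : ∀ p ∈ S, ∃ k : Fin (m+1), pts k = p := by
    intro p hp
    have h1 : p ∈ Set.range (S.orderEmbOfFin hm) := by
      rw [Finset.range_orderEmbOfFin S hm]; exact_mod_cast hp
    obtain ⟨k, hk⟩ := h1; exact ⟨k, hk⟩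
  have hnn : ∀ k, 0 ≤ pts k := fun k => (hS _ (hmem k)).1
  have hle : ∀ k, pts k ≤ l := fun k => (hS _ (hmem k)).2
  have hfirst : pts 0 = 0 := by
    have h1 : pts ⟨0, Nat.succ_pos m⟩ = S.min' ⟨0, h0⟩ :=
      Finset.orderEmbOfFin_zero hm (Nat.succ_pos m)
    have h2 : S.min' ⟨0, h0⟩ = 0 :=
      le_antisymm (S.min'_le 0 h0) (hS _ (S.min'_mem _)).1
    simpa [h2] using h1
  have hlast : pts (Fin.last m) = l := by
    have h1 : pts ⟨m+1-1, by omega⟩ = S.max' ⟨0, h0⟩ :=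
      Finset.orderEmbOfFin_last hm (Nat.succ_pos m)
    have h2 : S.max' ⟨0, h0⟩ = l :=
      le_antisymm (hS _ (S.max'_mem _)).2 (S.le_max' l hlS)
    simpa [Fin.last] using h1.trans h2
  have h1m : 1 ≤ m := by
    by_contra h
    have hm0 : m = 0 := by omega
    subst hm0
    have : pts 0 = pts (Fin.last 0) := rfl
    rw [hfirst, hlast] at this
    exact absurd this.symm (ne_of_gt hl)
  set A : Fin (m+1) → ℤ := fun k => ∑ p ∈ S.filter (fun q => q ≤ pts k), D p with hA
  have hA0 : A 0 = D 0 := by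
    have hf : S.filter (fun q => q ≤ pts 0) = {0} := by
      ext q
      simp only [Finset.mem_filter, Finset.mem_singleton, hfirst]
      constructor
      · rintro ⟨hq, hq0⟩; exact le_antisymm hq0 (hS q hq).1
      · rintro rfl; exact ⟨h0, le_refl _⟩
    simp [hA, hf]
  have hAlast : A (Fin.last m) = 0 := by
    have hf : S.filter (fun q => q ≤ pts (Fin.last m)) = S := by
      apply Finset.filter_true_of_mem
      intro q hq; rw [hlast]; exact (hS q hq).2
    simp [hA, hf, hsum]
  have hstep : ∀ i : Fin m, A i.succ = A i.castSucc + D (pts i.succ) := by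
    intro i
    have hlt : pts i.castSucc < pts i.succ := hmono (Fin.castSucc_lt_succ (i := i))
    have hf : S.filter (fun q => q ≤ pts i.succ)
        = insert (pts i.succ) (S.filter (fun q => q ≤ pts i.castSucc)) := by
      ext q
      simp only [Finset.mem_filter, Finset.mem_insert]
      constructor
      · rintro ⟨hq, hq1⟩
        by_cases h2 : q ≤ pts i.castSucc
        · exact Or.inr ⟨hq, h2⟩
        · left
          obtain ⟨k, hk⟩ := hsurj q hq
          push_neg at h2
          rw [← hk] at hq1 h2 ⊢
          have hk1 : k ≤ i.succ := hmono.le_iff_le.mp hq1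
          have hk2 : i.castSucc < k := hmono.lt_iff_lt.mp h2
          congr 1
          have := Fin.castSucc_lt_iff_succ_le.mp hk2
          exact le_antisymm hk1 this
      · rintro (rfl | ⟨hq, hq1⟩)
        · exact ⟨hmem _, le_refl _⟩
        · exact ⟨hq, hq1.trans hlt.le⟩
    have hni : pts i.succ ∉ S.filter (fun q => q ≤ pts i.castSucc) := by
      simp only [Finset.mem_filter, not_and]
      intro _; exact not_le.mpr hlt
    simp only [hA, hf, Finset.sum_insert hni]
    ring
  set slope : Fin m → ℤ := fun i => -A i.castSucc with hslope
  refine ⟨⟨m, pts, slope, hmono, hfirst, hlast⟩, ?_, ?_⟩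
  · -- eval 0 = eval l
    have he0 : (PLFun.mk m pts slope hmono hfirst hlast).eval 0 = 0 := by
      apply Finset.sum_eq_zero
      intro i _
      have h1 : min (0:ℝ) (pts i.succ) = 0 := min_eq_left (hnn _)
      have h2 : max (0:ℝ) (pts i.castSucc) = pts i.castSucc := max_eq_right (hnn _)
      simp [h1, h2]
    rw [he0]
    -- eval l = 0
    have he1 : (PLFun.mk m pts slope hmono hfirst hlast).eval l
        = ∑ i : Fin m, (slope i : ℝ) * (pts i.succ - pts i.castSucc) := by
      apply Finset.sum_congr rfl
      intro i _
      have h1 : min l (pts i.succ) = pts i.succ := min_eq_right (hle _)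
      have h2 : max (pts i.succ) (pts i.castSucc) = pts i.succ :=
        max_eq_left (hmono (Fin.castSucc_lt_succ (i := i))).le
      rw [h1, h2]
    rw [he1]
    set Q : ℕ → ℝ := fun j => if h : j < m+1 then pts ⟨j, h⟩ else l with hQ
    have hQcs : ∀ i : Fin m, pts i.castSucc = Q i := by
      intro i; simp only [hQ]; rw [dif_pos (by omega : (i:ℕ) < m+1)]; rfl
    have hQs : ∀ i : Fin m, pts i.succ = Q (i+1) := by
      intro i; simp only [hQ]; rw [dif_pos (by omega : (i:ℕ)+1 < m+1)]; rfl
    have hQm : Q m = l := by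
      simp only [hQ]; rw [dif_pos (by omega : m < m+1)]
      exact hlast
    have key : ∀ k : Fin (m+1),
        (∑ i : Fin m, if (k:ℕ) ≤ (i:ℕ) then pts i.succ - pts i.castSucc else 0)
          = l - pts k := by
      intro k
      have h1 : (∑ i : Fin m, if (k:ℕ) ≤ (i:ℕ) then pts i.succ - pts i.castSucc else 0)
          = ∑ j ∈ Finset.range m, (if (k:ℕ) ≤ j then Q (j+1) - Q j else 0) := by
        rw [← Fin.sum_univ_eq_sum_range (fun j => if (k:ℕ) ≤ j then Q (j+1) - Q j else 0) m]
        apply Finset.sum_congr rfl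
        intro i _
        rw [hQcs i, hQs i]
      rw [h1, ← Finset.sum_filter]
      have h2 : (Finset.range m).filter (fun j => (k:ℕ) ≤ j) = Finset.Ico (k:ℕ) m := by
        ext j; simp only [Finset.mem_filter, Finset.mem_range, Finset.mem_Ico]; omega
      rw [h2, Finset.sum_Ico_eq_sub _ (by omega : (k:ℕ) ≤ m),
        Finset.sum_range_sub Q, Finset.sum_range_sub Q, hQm]
      have : Q (k:ℕ) = pts k := by
        simp only [hQ]; rw [dif_pos k.isLt]
      rw [this]; ring
    calc (0:ℝ) = -∑ p ∈ S, (D p : ℝ) * (l - p) := by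
          have c1 : (∑ p ∈ S, (D p : ℝ)) = 0 := by exact_mod_cast hsum
          have : ∑ p ∈ S, (D p : ℝ) * (l - p)
              = l * (∑ p ∈ S, (D p : ℝ)) - ∑ p ∈ S, p * (D p : ℝ) := by
            rw [Finset.mul_sum, ← Finset.sum_sub_distrib]
            apply Finset.sum_congr rfl; intro p _; ring
          rw [this, c1, hmom]; ring
      _ = ∑ i : Fin m, (slope i : ℝ) * (pts i.succ - pts i.castSucc) := by
          have expand : ∀ i : Fin m, (slope i : ℝ) * (pts i.succ - pts i.castSucc)
              = -∑ p ∈ S, (if p ≤ pts i.castSucc then (D p : ℝ) * (pts i.succ - pts i.castSucc) else 0) := by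
            intro i
            have : ((slope i : ℤ) : ℝ) = -∑ p ∈ S, (if p ≤ pts i.castSucc then (D p : ℝ) else 0) := by
              simp only [hslope, hA]
              rw [Finset.sum_filter]
              push_cast
              ring
            rw [this, neg_mul, Finset.sum_mul]
            congr 1
            apply Finset.sum_congr rfl
            intro p _
            split <;> simp
          have main : ∑ i : Fin m, ∑ p ∈ S,
              (if p ≤ pts i.castSucc then (D p:ℝ) * (pts i.succ - pts i.castSucc) else 0)
              = ∑ p ∈ S, (D p : ℝ) * (l - p) := by
            rw [Finset.sum_comm]
            apply Finset.sum_congr rfl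
            intro p hp
            obtain ⟨k, rfl⟩ := hsurj p hp
            have step : ∀ i : Fin m,
                (if pts k ≤ pts i.castSucc then (D (pts k):ℝ) * (pts i.succ - pts i.castSucc) else 0)
                = (D (pts k):ℝ) * (if (k:ℕ) ≤ (i:ℕ) then (pts i.succ - pts i.castSucc) else 0) := by
              intro i
              have hiff : pts k ≤ pts i.castSucc ↔ (k:ℕ) ≤ (i:ℕ) := by
                rw [hmono.le_iff_le, Fin.le_def, Fin.coe_castSucc]
              simp only [hiff]
              split <;> simp
            rw [Finset.sum_congr rfl (fun i _ => step i), ← Finset.mul_sum, key k]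
          calc -∑ p ∈ S, (D p : ℝ) * (l - p)
              = -∑ i : Fin m, ∑ p ∈ S,
                  (if p ≤ pts i.castSucc then (D p:ℝ) * (pts i.succ - pts i.castSucc) else 0) := by
                rw [main]
            _ = ∑ i : Fin m, -∑ p ∈ S,
                  (if p ≤ pts i.castSucc then (D p:ℝ) * (pts i.succ - pts i.castSucc) else 0) :=
                (Finset.sum_neg_distrib _).symm
            _ = ∑ i : Fin m, (slope i : ℝ) * (pts i.succ - pts i.castSucc) :=
                Finset.sum_congr rfl (fun i _ => (expand i).symm)
  · -- divisor computation
    intro p hp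
    show (∑ i : Fin m, if pts i.succ = p then slope i else 0)
      - (∑ i : Fin m, if pts i.castSucc = p then slope i else 0) = D p
    by_cases hpS : p ∈ S
    · obtain ⟨k, rfl⟩ := hsurj p hpS
      have hs1 : ∀ j : Fin m, j.succ = k →
          (∑ i : Fin m, if pts i.succ = pts k then slope i else 0) = slope j := by
        intro j hj
        rw [Finset.sum_eq_single_of_mem j (Finset.mem_univ j)]
        · exact if_pos (by rw [hj])
        · intro i _ hij
          apply if_neg
          intro h
          exact hij (Fin.succ_injective m ((hmono.injective h).trans hj.symm))
      have hs2 : ∀ j : Fin m, j.castSucc = k →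
          (∑ i : Fin m, if pts i.castSucc = pts k then slope i else 0) = slope j := by
        intro j hj
        rw [Finset.sum_eq_single_of_mem j (Finset.mem_univ j)]
        · exact if_pos (by rw [hj])
        · intro i _ hij
          apply if_neg
          intro h
          exact hij (Fin.castSucc_injective m ((hmono.injective h).trans hj.symm))
      have hz1 : (k:ℕ) = 0 →
          (∑ i : Fin m, if pts i.succ = pts k then slope i else 0) = 0 := by
        intro hk0
        apply Finset.sum_eq_zero
        intro i _
        apply if_neg
        intro h
        have : i.succ = k := hmono.injective h
        have : ((i:ℕ) + 1) = 0 := by rw [← Fin.val_succ, this, hk0]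
        omega
      have hz2 : (k:ℕ) = m →
          (∑ i : Fin m, if pts i.castSucc = pts k then slope i else 0) = 0 := by
        intro hkm
        apply Finset.sum_eq_zero
        intro i _
        apply if_neg
        intro h
        have : i.castSucc = k := hmono.injective h
        have : (i:ℕ) = m := by rw [← Fin.coe_castSucc, this, hkm]
        omega
      by_cases hk0 : (k:ℕ) = 0
      · -- k = 0
        have hkeq : k = 0 := Fin.ext hk0
        obtain ⟨j2, hj2⟩ : ∃ j : Fin m, j.castSucc = k :=
          ⟨⟨0, h1m⟩, by apply Fin.ext; simp [hk0]⟩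
        rw [hz1 hk0, hs2 j2 hj2]
        have hAj2 : A j2.castSucc = D (pts k) := by
          rw [hj2, hkeq, hA0, hfirst]
        simp only [hslope]
        linarith [hAj2]
      · by_cases hkm : (k:ℕ) = m
        · -- k = last
          have hkeq : k = Fin.last m := Fin.ext (by simp [Fin.last, hkm])
          obtain ⟨j1, hj1⟩ : ∃ j : Fin m, j.succ = k :=
            ⟨⟨m-1, by omega⟩, by apply Fin.ext; simp [Fin.val_succ, hkm]; omega⟩
          rw [hz2 hkm, hs1 j1 hj1]
          have h1 := hstep j1
          rw [hj1, hkeq, hAlast] at h1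
          rw [hkeq]
          simp only [hslope]
          linarith [h1]
        · -- interior
          obtain ⟨j1, hj1⟩ : ∃ j : Fin m, j.succ = k :=
            ⟨⟨(k:ℕ)-1, by omega⟩, by apply Fin.ext; simp [Fin.val_succ]; omega⟩
          obtain ⟨j2, hj2⟩ : ∃ j : Fin m, j.castSucc = k :=
            ⟨⟨(k:ℕ), by omega⟩, by apply Fin.ext; simp⟩
          rw [hs1 j1 hj1, hs2 j2 hj2]
          simp only [hslope]
          rw [hj2]
          have h1 := hstep j1
          rw [hj1] at h1
          linarith [h1]
    · have e1 : (∑ i : Fin m, if pts i.succ = p then slope i else 0) = 0 :=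
        Finset.sum_eq_zero (fun i _ => if_neg
          (fun h => hpS (by rw [← h]; exact hmem i.succ)))
      have e2 : (∑ i : Fin m, if pts i.castSucc = p then slope i else 0) = 0 :=
        Finset.sum_eq_zero (fun i _ => if_neg
          (fun h => hpS (by rw [← h]; exact hmem i.castSucc)))
      rw [e1, e2, hD0 p hp hpS]
      ring

lemma total_sum' (M : ℕ) (C : ℕ → ℤ) :
    ∑ j : Fin M, (C ((j:ℕ)+1) - C (j:ℕ)) = C M - C 0 := by
  rw [Fin.sum_univ_eq_sum_range (fun j => C (j+1) - C j) M, Finset.sum_range_sub]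

lemma prefix_sum' (M K : ℕ) (C : ℕ → ℤ) (hK : K + 1 ≤ M) :
    ∑ j : Fin M, (if (j:ℕ) ≤ K then C ((j:ℕ)+1) - C (j:ℕ) else 0) = C (K+1) - C 0 := by
  rw [Fin.sum_univ_eq_sum_range (fun j => if j ≤ K then C (j+1) - C j else 0) M,
    ← Finset.sum_filter]
  have h : (Finset.range M).filter (fun j => j ≤ K) = Finset.range (K+1) := by
    ext j; simp only [Finset.mem_filter, Finset.mem_range]; omega
  rw [h, Finset.sum_range_sub]

lemma suffix_sum' (M K : ℕ) (C : ℕ → ℤ) (hK : K + 1 ≤ M) :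
    ∑ j : Fin M, (if ¬((j:ℕ) ≤ K) then C ((j:ℕ)+1) - C (j:ℕ) else 0) = C M - C (K+1) := by
  have h1 := prefix_sum' M K C hK
  have h2 := total_sum' M C
  have h3 : ∑ j : Fin M, (C ((j:ℕ)+1) - C (j:ℕ))
      = ∑ j : Fin M, ((if (j:ℕ) ≤ K then C ((j:ℕ)+1) - C (j:ℕ) else 0)
        + (if ¬((j:ℕ) ≤ K) then C ((j:ℕ)+1) - C (j:ℕ) else 0)) := by
    apply Finset.sum_congr rfl
    intro j _
    by_cases h : (j:ℕ) ≤ K <;> simp [h]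
  rw [Finset.sum_add_distrib, h1] at h3
  omega

lemma icc_sum' (M : ℕ) (C : ℕ → ℤ) (s u : Fin M) (h : s ≤ u) :
    ∑ j ∈ Finset.Icc s u, (C ((j:ℕ)+1) - C (j:ℕ)) = C ((u:ℕ)+1) - C (s:ℕ) := by
  have hmap := Fin.map_valEmbedding_Icc s u
  have : ∑ j ∈ Finset.Icc s u, (C ((j:ℕ)+1) - C (j:ℕ))
      = ∑ x ∈ Finset.Icc (s:ℕ) (u:ℕ), (C (x+1) - C x) := by
    rw [← hmap, Finset.sum_map]; rfl
  rw [this, ← Finset.Ico_add_one_right_eq_Icc, Finset.sum_Ico_eq_sub _ (by omega : (s:ℕ) ≤ (u:ℕ)+1),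
    Finset.sum_range_sub, Finset.sum_range_sub]
  omega

theorem rearrangement_on_a_segment (l : ℝ) (hl : 0 < l) (n : ℕ) (hn : 1 ≤ n)
    (a : ℤ) (I : Finset ℤ) (hI : I ⊆ insert (-1) (Finset.Icc 1 (n : ℤ)))
    (t : Fin n → ℝ) (ht : LConvex l t) :
    ∃ (aseq : Fin (n + 2) → ℤ) (F : PLFun l),
      AdmissibleSeq a aseq ∧
      F.eval 0 = F.eval l ∧
      (∀ p ∈ Set.Icc (0 : ℝ) l,
        (if dIpt l t I = p then a else 0)
          = (∑ j : Fin (n + 2), aseq j * (if rpt l t j = p then 1 else 0))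
            + F.div p) ∧
      (∀ t' : Fin n → ℝ,
        ((t' = fun _ => 0) ∨ ∃ k0 : Fin n, ∀ i, t' i = if i = k0 then l else 0) →
        ∀ p ∈ Set.Icc (0 : ℝ) l,
          (if dIpt l t' I = p then a else 0)
            = ∑ j : Fin (n + 2), aseq j * (if rpt l t' j = p then 1 else 0)) := by

  classical
  obtain ⟨htnn, htsum⟩ := ht
  have hne0 : l ≠ 0 := ne_of_gt hl
  set C : ℕ → ℤ := fun j => if j = 0 then 0 else
      if j ≤ n + 1 then (if ((j:ℤ) ∈ I ↔ (-1:ℤ) ∈ I) then a else 0) else a with hCdef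
  set aseq : Fin (n+2) → ℤ := fun j => C ((j:ℕ)+1) - C (j:ℕ) with haseq
  have hC0 : C 0 = 0 := by simp [hCdef]
  have hCn2 : C (n+2) = a := by
    simp only [hCdef]; rw [if_neg (by omega), if_neg (by omega)]
  have hn1I : ((n:ℤ)+1) ∉ I := by
    intro h
    have := hI h
    simp only [Finset.mem_insert, Finset.mem_Icc] at this
    omega
  have hCval : ∀ j : ℕ, 1 ≤ j → j ≤ n+1 →
      C j = if ((j:ℤ) ∈ I ↔ (-1:ℤ) ∈ I) then a else 0 := by
    intro j h1 h2; simp only [hCdef]; rw [if_neg (by omega), if_pos h2]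
  have hCn1 : C (n+1) = if (-1:ℤ) ∈ I then 0 else a := by
    rw [hCval (n+1) (by omega) (le_refl _)]
    have hc : ((n+1 : ℕ) : ℤ) = (n:ℤ)+1 := by push_cast; ring
    rw [hc]
    by_cases h : (-1:ℤ) ∈ I <;> simp [h, hn1I]
  have hC01 : ∀ j, C j = 0 ∨ C j = a := by
    intro j; simp only [hCdef]
    split
    · exact Or.inl rfl
    · split
      · split
        · exact Or.inr rfl
        · exact Or.inl rfl
      · exact Or.inr rfl
  have hadm : AdmissibleSeq a aseq := by
    refine ⟨?_, ?_, ?_⟩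
    · intro j
      have h1 := hC01 ((j:ℕ)+1); have h2 := hC01 (j:ℕ)
      simp only [haseq]; omega
    · simp only [haseq]; rw [total_sum' (n+2) C, hC0, hCn2]; ring
    · intro s u hsu
      simp only [haseq]
      rw [icc_sum' (n+2) C s u hsu]
      have h1 := hC01 ((u:ℕ)+1); have h2 := hC01 (s:ℕ)
      rcases h1 with h1|h1 <;> rcases h2 with h2|h2 <;> rw [h1, h2] <;>
        simp [abs_nonneg]
  have htotal : ∑ j : Fin (n+2), aseq j = a := hadm.2.1
  have hpre : ∀ K : ℕ, K + 1 ≤ n+2 →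
      ∑ j : Fin (n+2), (if (j:ℕ) ≤ K then aseq j else 0) = C (K+1) := by
    intro K hK
    simp only [haseq]
    rw [prefix_sum' (n+2) K C hK, hC0]; ring
  have hsuf : ∀ K : ℕ, K + 1 ≤ n+2 →
      ∑ j : Fin (n+2), (if ¬((j:ℕ) ≤ K) then aseq j else 0) = a - C (K+1) := by
    intro K hK
    simp only [haseq]
    rw [suffix_sum' (n+2) K C hK, hCn2]
  -- the key moment identity
  set Sf : ℝ := ∑ i ∈ Finset.univ.filter (fun i : Fin n => ((i : ℕ) : ℤ) + 1 ∈ I), t i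
    with hSfdef
  have hSf_nn : 0 ≤ Sf := Finset.sum_nonneg (fun i _ => htnn i)
  have hSf_letot : Sf ≤ ∑ i, t i :=
    Finset.sum_le_sum_of_subset_of_nonneg (Finset.filter_subset _ _) (fun i _ _ => htnn i)
  have hSf_le : Sf ≤ l := le_trans hSf_letot htsum
  set R : ℕ → ℝ := fun j => if j ≤ n then
      ∑ i ∈ Finset.univ.filter (fun i : Fin n => (i:ℕ) < j), t i else l with hRdef
  have hrR : ∀ j : Fin (n+2), rpt l t j = R (j:ℕ) := by
    intro j
    by_cases hj : (j:ℕ) = n+1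
    · simp only [rpt, hRdef]
      rw [if_pos hj, hj, if_neg (by omega)]
    · have hjn : (j:ℕ) ≤ n := by have := j.isLt; omega
      simp only [rpt, hRdef]
      rw [if_neg hj, if_pos hjn]
  have hRn2 : R (n+2) = l := by simp only [hRdef]; rw [if_neg (by omega)]
  have hRn1 : R (n+1) = l := by simp only [hRdef]; rw [if_neg (by omega)]
  have hRn : R n = ∑ i, t i := by
    simp only [hRdef]; rw [if_pos (le_refl n)]
    congr 1
    apply Finset.filter_true_of_mem
    intro i _; exact i.isLt
  have hkey : ∑ j : Fin (n+2), (aseq j : ℝ) * rpt l t j = (a : ℝ) * dIpt l t I := by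
    have e1 : ∑ j : Fin (n+2), (aseq j : ℝ) * rpt l t j
        = ∑ j ∈ Finset.range (n+2), (((C (j+1) : ℝ)) - C j) * R j := by
      rw [← Fin.sum_univ_eq_sum_range (fun j => (((C (j+1):ℝ)) - C j) * R j) (n+2)]
      apply Finset.sum_congr rfl
      intro j _
      rw [hrR j]
      simp only [haseq]
      push_cast
      ring
    have e2 : ∑ j ∈ Finset.range (n+2), (((C (j+1):ℝ)) - C j) * R j
        = ((C (n+2):ℝ) * R (n+2) - (C 0:ℝ) * R 0)
          - ∑ j ∈ Finset.range (n+2), (C (j+1):ℝ) * (R (j+1) - R j) := by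
      rw [← Finset.sum_range_sub (fun j => (C j : ℝ) * R j) (n+2), ← Finset.sum_sub_distrib]
      apply Finset.sum_congr rfl
      intro j _
      ring
    have e3 : ∑ j ∈ Finset.range (n+2), (C (j+1):ℝ) * (R (j+1) - R j)
        = ∑ j ∈ Finset.range n, (C (j+1):ℝ) * (R (j+1) - R j)
          + (C (n+1):ℝ) * (R (n+1) - R n) + (C (n+2):ℝ) * (R (n+2) - R (n+1)) := by
      rw [Finset.sum_range_succ, Finset.sum_range_succ]
    have e4 : ∑ j ∈ Finset.range n, (C (j+1):ℝ) * (R (j+1) - R j)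
        = ∑ i : Fin n, (C ((i:ℕ)+1):ℝ) * t i := by
      rw [← Fin.sum_univ_eq_sum_range (fun j => (C (j+1):ℝ) * (R (j+1) - R j)) n]
      apply Finset.sum_congr rfl
      intro i _
      congr 1
      have hi : (i:ℕ) < n := i.isLt
      have h1 : R ((i:ℕ)+1)
          = ∑ x ∈ Finset.univ.filter (fun x : Fin n => (x:ℕ) < (i:ℕ)+1), t x := by
        simp only [hRdef]; rw [if_pos (by omega)]
      have h2 : R (i:ℕ)
          = ∑ x ∈ Finset.univ.filter (fun x : Fin n => (x:ℕ) < (i:ℕ)), t x := by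
        simp only [hRdef]; rw [if_pos (by omega)]
      have h3 : Finset.univ.filter (fun x : Fin n => (x:ℕ) < (i:ℕ)+1)
          = insert i (Finset.univ.filter (fun x : Fin n => (x:ℕ) < (i:ℕ))) := by
        ext x
        simp only [Finset.mem_filter, Finset.mem_insert, Finset.mem_univ, true_and,
          Fin.ext_iff]
        omega
      have h4 : i ∉ Finset.univ.filter (fun x : Fin n => (x:ℕ) < (i:ℕ)) := by simp
      rw [h1, h2, h3, Finset.sum_insert h4]
      ring
    rw [e1, e2, e3, e4, hRn2, hRn1, hRn, hC0, hCn2]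
    by_cases hmI : (-1:ℤ) ∈ I
    · have hCn1' : C (n+1) = 0 := by rw [hCn1, if_pos hmI]
      have hterm : ∀ i : Fin n, (C ((i:ℕ)+1):ℝ) * t i
          = if ((i:ℕ):ℤ) + 1 ∈ I then (a:ℝ) * t i else 0 := by
        intro i
        rw [hCval ((i:ℕ)+1) (by omega) (by have := i.isLt; omega)]
        have hc : (((i:ℕ)+1 : ℕ) : ℤ) = ((i:ℕ):ℤ) + 1 := by push_cast; ring
        rw [hc]
        by_cases h2 : ((i:ℕ):ℤ) + 1 ∈ I <;> simp [h2, hmI]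
      have hsum2 : ∑ i : Fin n, (C ((i:ℕ)+1):ℝ) * t i = (a:ℝ) * Sf := by
        rw [Finset.sum_congr rfl (fun i _ => hterm i), hSfdef, Finset.mul_sum,
          ← Finset.sum_filter]
      have hd : dIpt l t I = l - Sf := by
        simp only [dIpt, hSfdef]; rw [if_pos hmI]
      rw [hsum2, hd, hCn1']
      push_cast
      ring
    · have hCn1' : C (n+1) = a := by rw [hCn1, if_neg hmI]
      have hterm : ∀ i : Fin n, (C ((i:ℕ)+1):ℝ) * t i
          = if ¬(((i:ℕ):ℤ) + 1 ∈ I) then (a:ℝ) * t i else 0 := by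
        intro i
        rw [hCval ((i:ℕ)+1) (by omega) (by have := i.isLt; omega)]
        have hc : (((i:ℕ)+1 : ℕ) : ℤ) = ((i:ℕ):ℤ) + 1 := by push_cast; ring
        rw [hc]
        by_cases h2 : ((i:ℕ):ℤ) + 1 ∈ I <;> simp [h2, hmI]
      have hsum2 : ∑ i : Fin n, (C ((i:ℕ)+1):ℝ) * t i
          = (a:ℝ) * ∑ i ∈ Finset.univ.filter
              (fun i : Fin n => ¬(((i:ℕ):ℤ) + 1 ∈ I)), t i := by
        rw [Finset.sum_congr rfl (fun i _ => hterm i), ← Finset.sum_filter,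
          ← Finset.mul_sum]
      have hsplit : Sf + ∑ i ∈ Finset.univ.filter
          (fun i : Fin n => ¬(((i:ℕ):ℤ) + 1 ∈ I)), t i = ∑ i, t i := by
        rw [hSfdef]
        exact Finset.sum_filter_add_sum_filter_not Finset.univ _ t
      have hd : dIpt l t I = Sf := by
        simp only [dIpt, hSfdef]; rw [if_neg hmI]
      rw [hsum2, hd, hCn1']
      push_cast
      linear_combination (-(a:ℝ)) * hsplit
  -- membership facts
  have hd_mem : dIpt l t I ∈ Set.Icc (0:ℝ) l := by
    simp only [dIpt, ← hSfdef]
    split <;> constructor <;> linarith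
  have hr_mem : ∀ j : Fin (n+2), rpt l t j ∈ Set.Icc (0:ℝ) l := by
    intro j
    rw [hrR j]
    simp only [hRdef]
    split
    · constructor
      · exact Finset.sum_nonneg (fun i _ => htnn i)
      · exact le_trans (Finset.sum_le_sum_of_subset_of_nonneg
          (Finset.filter_subset _ _) (fun i _ _ => htnn i)) htsum
    · exact ⟨hl.le, le_refl l⟩
  have hr0 : rpt l t 0 = 0 := by
    simp only [rpt]
    rw [if_neg (by simp)]
    apply Finset.sum_eq_zero
    intro i hi
    simp at hi
  have hrlast : rpt l t (Fin.last (n+1)) = l := by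
    simp [rpt, Fin.val_last]
  set S : Finset ℝ := insert (dIpt l t I) (Finset.image (rpt l t) Finset.univ) with hSdef
  have hdS : dIpt l t I ∈ S := Finset.mem_insert_self _ _
  have hrS : ∀ j : Fin (n+2), rpt l t j ∈ S := fun j =>
    Finset.mem_insert_of_mem (Finset.mem_image_of_mem _ (Finset.mem_univ j))
  have h0S : (0:ℝ) ∈ S := by rw [← hr0]; exact hrS 0
  have hlSS : l ∈ S := by rw [← hrlast]; exact hrS (Fin.last (n+1))
  have hSsub : ∀ p ∈ S, p ∈ Set.Icc (0:ℝ) l := by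
    intro p hp
    rw [hSdef, Finset.mem_insert] at hp
    rcases hp with rfl | hp
    · exact hd_mem
    · obtain ⟨j, _, rfl⟩ := Finset.mem_image.mp hp
      exact hr_mem j
  set D : ℝ → ℤ := fun p => (if dIpt l t I = p then a else 0)
    - ∑ j : Fin (n+2), aseq j * (if rpt l t j = p then 1 else 0) with hDdef
  have hD0 : ∀ p ∈ Set.Icc (0:ℝ) l, p ∉ S → D p = 0 := by
    intro p _ hpS
    have h1 : dIpt l t I ≠ p := by
      intro h; exact hpS (h ▸ hdS)
    have h2 : ∀ j : Fin (n+2), rpt l t j ≠ p := by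
      intro j h; exact hpS (h ▸ hrS j)
    simp only [hDdef]
    rw [if_neg h1]
    rw [Finset.sum_eq_zero (fun j _ => by rw [if_neg (h2 j), mul_zero])]
    simp
  have hsumD : ∑ p ∈ S, D p = 0 := by
    simp only [hDdef]
    rw [Finset.sum_sub_distrib]
    have h1 : ∑ p ∈ S, (if dIpt l t I = p then a else 0) = a := by
      rw [Finset.sum_ite_eq S (dIpt l t I) (fun _ => a), if_pos hdS]
    have h2 : ∑ p ∈ S, ∑ j : Fin (n+2), aseq j * (if rpt l t j = p then 1 else 0) = a := by
      rw [Finset.sum_comm]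
      have : ∀ j : Fin (n+2), ∑ p ∈ S, aseq j * (if rpt l t j = p then 1 else 0)
          = aseq j := by
        intro j
        rw [← Finset.mul_sum, Finset.sum_ite_eq S (rpt l t j) (fun _ => (1:ℤ)),
          if_pos (hrS j), mul_one]
      rw [Finset.sum_congr rfl (fun j _ => this j), htotal]
    rw [h1, h2, sub_self]
  have hmomD : ∑ p ∈ S, p * (D p : ℝ) = 0 := by
    have hcast : ∀ p, ((D p : ℤ) : ℝ) = (if dIpt l t I = p then (a:ℝ) else 0)
        - ∑ j : Fin (n+2), (aseq j : ℝ) * (if rpt l t j = p then 1 else 0) := by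
      intro p
      simp only [hDdef]
      push_cast
      ring
    calc ∑ p ∈ S, p * (D p : ℝ)
        = ∑ p ∈ S, (p * (if dIpt l t I = p then (a:ℝ) else 0)
            - ∑ j : Fin (n+2), (aseq j : ℝ) * (p * (if rpt l t j = p then 1 else 0))) := by
          apply Finset.sum_congr rfl
          intro p _
          rw [hcast p, mul_sub, Finset.mul_sum]
          congr 1
          apply Finset.sum_congr rfl
          intro j _
          ring
      _ = dIpt l t I * (a:ℝ) - ∑ j : Fin (n+2), (aseq j : ℝ) * rpt l t j := by
          rw [Finset.sum_sub_distrib]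
          congr 1
          · have : ∀ p, p * (if dIpt l t I = p then (a:ℝ) else 0)
                = (if dIpt l t I = p then p * (a:ℝ) else 0) := by
              intro p; split <;> ring
            rw [Finset.sum_congr rfl (fun p _ => this p),
              Finset.sum_ite_eq S (dIpt l t I) (fun x => x * (a:ℝ)), if_pos hdS]
          · rw [Finset.sum_comm]
            apply Finset.sum_congr rfl
            intro j _
            have : ∀ p, (aseq j : ℝ) * (p * (if rpt l t j = p then 1 else 0))
                = (if rpt l t j = p then (aseq j : ℝ) * p else 0) := by
              intro p; split <;> ring
            rw [Finset.sum_congr rfl (fun p _ => this p),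
              Finset.sum_ite_eq S (rpt l t j) (fun x => (aseq j : ℝ) * x),
              if_pos (hrS j)]
      _ = 0 := by rw [hkey]; ring
  obtain ⟨F, hF1, hF2⟩ := realize l hl S hSsub h0S hlSS D hD0 hsumD hmomD
  refine ⟨aseq, F, hadm, hF1, ?_, ?_⟩
  · intro p hp
    have := hF2 p hp
    simp only [hDdef] at this
    omega
  · -- part (2): degenerate tuples
    intro t' ht' p hp
    have key2 : ∃ K : ℕ, K ≤ n+1
        ∧ (∀ j : Fin (n+2), rpt l t' j = if (j:ℕ) ≤ K then 0 else l)
        ∧ ((dIpt l t' I = 0 ∧ C (K+1) = a) ∨ (dIpt l t' I = l ∧ C (K+1) = 0)) := by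
      rcases ht' with rfl | ⟨k0, hk0⟩
      · refine ⟨n, by omega, ?_, ?_⟩
        · intro j
          by_cases hj : (j:ℕ) = n+1
          · simp only [rpt]
            rw [if_pos hj, if_neg (by omega)]
          · have hjn : (j:ℕ) ≤ n := by have := j.isLt; omega
            simp only [rpt]
            rw [if_neg hj, if_pos hjn]
            simp
        · have hd0 : dIpt l (fun _ : Fin n => (0:ℝ)) I = if (-1:ℤ) ∈ I then l else 0 := by
            simp only [dIpt]
            split <;> simp
          by_cases hmI : (-1:ℤ) ∈ I
          · right
            constructor
            · rw [hd0, if_pos hmI]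
            · rw [hCn1, if_pos hmI]
          · left
            constructor
            · rw [hd0, if_neg hmI]
            · rw [hCn1, if_neg hmI]
      · refine ⟨(k0:ℕ), by have := k0.isLt; omega, ?_, ?_⟩
        · intro j
          by_cases hj : (j:ℕ) = n+1
          · simp only [rpt]
            rw [if_pos hj, if_neg (by have := k0.isLt; omega)]
          · have hjn : (j:ℕ) ≤ n := by have := j.isLt; omega
            simp only [rpt]
            rw [if_neg hj]
            have hsum' : ∑ i ∈ Finset.univ.filter (fun i : Fin n => (i:ℕ) < (j:ℕ)), t' i
                = if (k0:ℕ) < (j:ℕ) then l else 0 := by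
              rw [Finset.sum_congr rfl (fun i _ => hk0 i)]
              rw [Finset.sum_ite_eq' (Finset.univ.filter (fun i : Fin n => (i:ℕ) < (j:ℕ)))
                k0 (fun _ => l)]
              congr 1
              simp
            rw [hsum']
            by_cases h : (k0:ℕ) < (j:ℕ)
            · rw [if_pos h, if_neg (by omega)]
            · rw [if_neg h, if_pos (by omega)]
        · have hX : ∑ i ∈ Finset.univ.filter (fun i : Fin n => ((i:ℕ):ℤ) + 1 ∈ I), t' i
              = if ((k0:ℕ):ℤ) + 1 ∈ I then l else 0 := by
            rw [Finset.sum_congr rfl (fun i _ => hk0 i)]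
            rw [Finset.sum_ite_eq' (Finset.univ.filter
              (fun i : Fin n => ((i:ℕ):ℤ) + 1 ∈ I)) k0 (fun _ => l)]
            congr 1
            simp
          have hCk : C ((k0:ℕ)+1) = if (((k0:ℕ):ℤ) + 1 ∈ I ↔ (-1:ℤ) ∈ I) then a else 0 := by
            rw [hCval ((k0:ℕ)+1) (by omega) (by have := k0.isLt; omega)]
            have hc : (((k0:ℕ)+1 : ℕ) : ℤ) = ((k0:ℕ):ℤ) + 1 := by push_cast; ring
            rw [hc]
          by_cases h1 : (-1:ℤ) ∈ I <;> by_cases h2 : ((k0:ℕ):ℤ) + 1 ∈ I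
          · left
            constructor
            · simp only [dIpt]; rw [if_pos h1, hX, if_pos h2]; ring
            · rw [hCk, if_pos (by simp [h1, h2])]
          · right
            constructor
            · simp only [dIpt]; rw [if_pos h1, hX, if_neg h2]; ring
            · rw [hCk, if_neg (by simp [h1, h2])]
          · right
            constructor
            · simp only [dIpt]; rw [if_neg h1, hX, if_pos h2]
            · rw [hCk, if_neg (by simp [h1, h2])]
          · left
            constructor
            · simp only [dIpt]; rw [if_neg h1, hX, if_neg h2]
            · rw [hCk, if_pos (by simp [h1, h2])]
    obtain ⟨K, hK, hr', hcase⟩ := key2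
    by_cases hp0 : p = 0
    · subst hp0
      have hs : ∑ j : Fin (n+2), aseq j * (if rpt l t' j = 0 then 1 else 0)
          = ∑ j : Fin (n+2), (if (j:ℕ) ≤ K then aseq j else 0) := by
        apply Finset.sum_congr rfl
        intro j _
        rw [hr' j]
        by_cases h : (j:ℕ) ≤ K
        · rw [if_pos h, if_pos h, if_pos rfl, mul_one]
        · rw [if_neg h, if_neg h, if_neg hne0, mul_zero]
      rw [hs, hpre K (by omega)]
      rcases hcase with ⟨hd, hc⟩ | ⟨hd, hc⟩
      · rw [hd, if_pos rfl, hc]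
      · rw [hd, if_neg hne0, hc]
    · by_cases hpl : p = l
      · have hs : ∑ j : Fin (n+2), aseq j * (if rpt l t' j = p then 1 else 0)
            = ∑ j : Fin (n+2), (if ¬((j:ℕ) ≤ K) then aseq j else 0) := by
          apply Finset.sum_congr rfl
          intro j _
          rw [hr' j]
          by_cases h : (j:ℕ) ≤ K
          · rw [if_pos h, if_neg (fun he => hp0 he.symm), mul_zero,
              if_neg (by simpa using h)]
          · rw [if_neg h, if_pos hpl.symm, mul_one, if_pos h]
        rw [hs, hsuf K (by omega)]
        rcases hcase with ⟨hd, hc⟩ | ⟨hd, hc⟩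
        · rw [hd, if_neg (by rw [hpl]; exact fun he => hne0 he.symm), hc]
          ring
        · rw [hd, if_pos hpl.symm, hc]
          ring
      · have hs : ∑ j : Fin (n+2), aseq j * (if rpt l t' j = p then 1 else 0) = 0 := by
          apply Finset.sum_eq_zero
          intro j _
          rw [hr' j]
          by_cases h : (j:ℕ) ≤ K
          · rw [if_pos h, if_neg (fun he => hp0 he.symm), mul_zero]
          · rw [if_neg h, if_neg (fun he => hpl he.symm), mul_zero]
        rw [hs]
        rcases hcase with ⟨hd, _⟩ | ⟨hd, _⟩
        · rw [hd, if_neg (fun he => hp0 he.symm)]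
        · rw [hd, if_neg (fun he => hpl he.symm)]
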